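/- arXiv:2012.01847 — 2 statements merged into one kernel-verified Lean document; each statement's English description precedes it below -/
import Mathlib

section
/- (Abstract soundness) Let U be a confluent binary relation on a type α with a normal-form function nf, and let T be a binary relation satisfying the diamond property with respect to U: whenever T c d and U c e, there exists f with U d f and T e f. If there exist c' and d' with EqvGen U c c', T c' d', and EqvGen U d' d, then there exists e with T (nf c) e and ReflTransGen U e (nf d). -/
open Relation

private lemma cr_join {α : Type*} {U : α → α → Prop}
    (hconf : ∀ a b c, ReflTransGen U a b → ReflTransGen U a c →
      ∃ e, ReflTransGen U b e ∧ ReflTransGen U c e) :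
    ∀ {a b}, EqvGen U a b → ∃ e, ReflTransGen U a e ∧ ReflTransGen U b e := by
  intro a b h
  induction h with
  | rel x y h => exact ⟨y, ReflTransGen.single h, ReflTransGen.refl⟩
  | refl x => exact ⟨x, ReflTransGen.refl, ReflTransGen.refl⟩
  | symm x y _ ih => obtain ⟨e, h1, h2⟩ := ih; exact ⟨e, h2, h1⟩
  | trans x y z _ _ ih1 ih2 =>
      obtain ⟨e1, hx, hy⟩ := ih1
      obtain ⟨e2, hy', hz⟩ := ih2
      obtain ⟨e, he1, he2⟩ := hconf y e1 e2 hy hy'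
      exact ⟨e, hx.trans he1, hz.trans he2⟩

private lemma normal_rtg_eq {α : Type*} {U : α → α → Prop} {a b : α}
    (hn : ¬ ∃ d, U a d) (h : ReflTransGen U a b) : b = a := by
  rcases h.cases_head with h | ⟨c, hc, _⟩
  · exact h.symm
  · exact absurd ⟨c, hc⟩ hn

private lemma diamond_rtg {α : Type*} {U T : α → α → Prop}
    (hdiamond : ∀ c d e, T c d → U c e → ∃ f, U d f ∧ T e f) :
    ∀ {c d e}, T c d → ReflTransGen U c e → ∃ f, ReflTransGen U d f ∧ T e f := by
  intro c d e hT h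
  induction h generalizing d with
  | refl => exact ⟨d, ReflTransGen.refl, hT⟩
  | tail _ hstep ih =>
      obtain ⟨f, hf, hTf⟩ := ih hT
      obtain ⟨g, hg, hTg⟩ := hdiamond _ _ _ hTf hstep
      exact ⟨g, hf.tail hg, hTg⟩

private lemma rtg_to_eqv {α : Type*} {U : α → α → Prop} {a b : α}
    (h : ReflTransGen U a b) : EqvGen U a b := by
  induction h with
  | refl => exact EqvGen.refl _
  | tail _ hstep ih => exact ih.trans _ _ _ (EqvGen.rel _ _ hstep)

/-- Abstract soundness: a `T`-step modulo `U` can be implemented by a `T`-step on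
`U`-normal forms followed by `U`-renormalisation. -/
theorem abstract_soundness {α : Type*} (U T : α → α → Prop) (nf : α → α)
    (hconf : ∀ a b c, Relation.ReflTransGen U a b → Relation.ReflTransGen U a c →
      ∃ e, Relation.ReflTransGen U b e ∧ Relation.ReflTransGen U c e)
    (hnf_reach : ∀ c, Relation.ReflTransGen U c (nf c))
    (hnf_normal : ∀ c, ¬ ∃ d, U (nf c) d)
    (hdiamond : ∀ c d e, T c d → U c e → ∃ f, U d f ∧ T e f) :
    ∀ c d, (∃ c' d', Relation.EqvGen U c c' ∧ T c' d' ∧ Relation.EqvGen U d' d) →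
      ∃ e, T (nf c) e ∧ Relation.ReflTransGen U e (nf d) := by
  intro c d ⟨c', d', hcc', hT, hd'd⟩
  -- c' reaches nf c
  obtain ⟨e, hce, hc'e⟩ := cr_join hconf hcc'
  obtain ⟨e', hnfe', hee'⟩ := hconf c (nf c) e (hnf_reach c) hce
  have he' : e' = nf c := normal_rtg_eq (hnf_normal c) hnfe'
  have hc'nf : ReflTransGen U c' (nf c) := hc'e.trans (he' ▸ hee')
  -- transport T along that reduction
  obtain ⟨f, hd'f, hTf⟩ := diamond_rtg hdiamond hT hc'nf
  -- f is equivalent to d, hence reaches nf d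
  have hfd : EqvGen U f d :=
    (EqvGen.symm _ _ (rtg_to_eqv hd'f)).trans _ _ _ hd'd
  obtain ⟨g, hfg, hdg⟩ := cr_join hconf hfd
  obtain ⟨h, hnfh, hgh⟩ := hconf d (nf d) g (hnf_reach d) hdg
  have hh : h = nf d := normal_rtg_eq (hnf_normal d) hnfh
  exact ⟨f, hTf, hfg.trans (hh ▸ hgh)⟩
end

section
/- (Abstract completeness on normal forms) Let U be a binary relation on a type α with a normal-form function nf, and let T satisfy the diamond property with respect to U (whenever T c d and U c e, there exists f with U d f and T e f). Suppose R is a binary relation such that whenever T c d, c rewrites by R modulo U to d. Then whenever T c d holds, there exists e with T (nf c) e, and nf c rewrites by R modulo U to e; hence c rewrites by R modulo U to a U-equivalent of d. -/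
/-- `c` rewrites by `R` modulo `U` to `d`. -/
def RewModulo {α : Type*} (R U : α → α → Prop) (c d : α) : Prop :=
  ∃ c' d', Relation.EqvGen U c c' ∧ R c' d' ∧ Relation.EqvGen U d' d

lemma lift_along {α : Type*} (U T : α → α → Prop)
    (hdiamond : ∀ c d e, T c d → U c e → ∃ f, U d f ∧ T e f)
    {c c' : α} (h : Relation.ReflTransGen U c c') :
    ∀ d, T c d → ∃ e, T c' e ∧ Relation.ReflTransGen U d e := by
  induction h with
  | refl => exact fun d hd => ⟨d, hd, Relation.ReflTransGen.refl⟩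
  | tail _ hstep ih =>
    intro d hd
    obtain ⟨e, he, hde⟩ := ih d hd
    obtain ⟨f, hef, hf⟩ := hdiamond _ _ _ he hstep
    exact ⟨f, hf, hde.tail hef⟩

/-- Abstract completeness on normal forms: `T`-redexes survive `U`-normalisation and
every `T`-step is an `R`-step modulo `U`, so a `T`-step from `c` gives an `R`-step modulo `U`
from `nf c` to some `e` that is `U`-equivalent to `d`. -/
theorem abstract_completeness_nf {α : Type*} (U T R : α → α → Prop) (nf : α → α)
    (hnf_reach : ∀ c, Relation.ReflTransGen U c (nf c))
    (hnf_normal : ∀ c, ¬ ∃ d, U (nf c) d)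
    (hdiamond : ∀ c d e, T c d → U c e → ∃ f, U d f ∧ T e f)
    (hTR : ∀ c d, T c d → RewModulo R U c d) :
    ∀ c d, T c d →
      ∃ e, T (nf c) e ∧ RewModulo R U (nf c) e ∧ Relation.EqvGen U e d := by
  intro c d hcd
  obtain ⟨e, he, hde⟩ := lift_along U T hdiamond (hnf_reach c) d hcd
  refine ⟨e, he, hTR _ _ he, ?_⟩
  clear he hcd hTR
  induction hde with
  | refl => exact Relation.EqvGen.refl d
  | tail _ hstep ih => exact (Relation.EqvGen.rel _ _ hstep).symm _ _ |>.trans _ _ _ ih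
end
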